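/- Let k ≥ 1 and N ≥ 0 be integers and let a_1, …, a_k be distinct nonzero complex numbers. Then the k(N+1) functions f_{i,s} : ℤ → ℂ defined by f_{i,s}(n) = a_i^n · n^s, for 1 ≤ i ≤ k and 0 ≤ s ≤ N, are linearly independent over ℂ; in fact their restrictions to the finite set {1, 2, …, k(N+1)} are already linearly independent. -/

import Mathlib

open Polynomial

noncomputable def expPolyTheta : Module.End ℂ (Polynomial ℂ) where
  toFun p := X * derivative p
  map_add' p q := by simp [mul_add]
  map_smul' c p := by simp [mul_smul_comm]

lemma expPolyTheta_apply (p : ℂ[X]) : expPolyTheta p = X * derivative p := rfl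

lemma expPolyTheta_monomial (m : ℕ) (c : ℂ) :
    expPolyTheta (C c * X ^ m) = C (c * (m : ℂ)) * X ^ m := by
  cases m with
  | zero => simp [expPolyTheta_apply]
  | succ m =>
    rw [expPolyTheta_apply, derivative_C_mul, derivative_X_pow]
    push_cast [C_add, C_mul, C_1]
    ring

lemma expPolyTheta_pow_monomial (s m : ℕ) (c : ℂ) :
    (expPolyTheta ^ s) (C c * X ^ m) = C (c * (m : ℂ) ^ s) * X ^ m := by
  induction s generalizing c with
  | zero => simp
  | succ s ih =>
    rw [pow_succ, Module.End.mul_apply, expPolyTheta_monomial, ih]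
    congr 1
    push_cast
    ring

lemma X_mul_derivative_X_pow (u : ℕ) :
    (X : ℂ[X]) * derivative (X ^ u) = (u : ℂ) • X ^ u := by
  cases u with
  | zero => simp
  | succ u =>
    rw [derivative_X_pow, smul_eq_C_mul]
    push_cast
    ring

lemma expPolyTheta_term (u : ℕ) (p : ℂ[X]) :
    expPolyTheta (X ^ u * derivative^[u] p) =
      (u : ℂ) • (X ^ u * derivative^[u] p) + X ^ (u + 1) * derivative^[u + 1] p := by
  rw [expPolyTheta_apply, derivative_mul, mul_add, ← mul_assoc,
    X_mul_derivative_X_pow, smul_mul_assoc, Function.iterate_succ_apply', pow_succ]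
  ring_nf

lemma expPolyTheta_pow_structure (t : ℕ) (p : ℂ[X]) :
    ∃ c : ℕ → ℂ, c t = 1 ∧ (∀ u, t < u → c u = 0) ∧
      (expPolyTheta ^ t) p =
        ∑ u ∈ Finset.range (t + 1), c u • (X ^ u * derivative^[u] p) := by
  induction t with
  | zero =>
    refine ⟨fun u => if u = 0 then 1 else 0, by simp, fun u hu => if_neg (by omega), ?_⟩
    simp
  | succ t ih =>
    obtain ⟨c, hct, hc0, heq⟩ := ih
    refine ⟨fun u => c u * u + if u = 0 then 0 else c (u - 1), ?_, ?_, ?_⟩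
    · simp [hc0 (t + 1) (Nat.lt_succ_self t), hct]
    · intro u hu
      have h1 : c u = 0 := hc0 u (Nat.lt_of_succ_lt hu)
      have h2 : u ≠ 0 := by omega
      have h3 : c (u - 1) = 0 := hc0 (u - 1) (by omega)
      simp [h1, h2, h3]
    · rw [pow_succ', Module.End.mul_apply, heq, map_sum]
      simp_rw [map_smul, expPolyTheta_term, smul_add, smul_smul]
      rw [Finset.sum_add_distrib]
      have hA : ∑ u ∈ Finset.range (t + 2), (c u * u) • ((X:ℂ[X]) ^ u * derivative^[u] p)
          = ∑ u ∈ Finset.range (t + 1), (c u * u) • ((X:ℂ[X]) ^ u * derivative^[u] p) := by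
        rw [Finset.sum_range_succ, hc0 (t + 1) (Nat.lt_succ_self t)]
        simp
      have hB : ∑ u ∈ Finset.range (t + 2),
            (if u = 0 then (0:ℂ) else c (u - 1)) • ((X:ℂ[X]) ^ u * derivative^[u] p)
          = ∑ u ∈ Finset.range (t + 1), c u • ((X:ℂ[X]) ^ (u + 1) * derivative^[u + 1] p) := by
        rw [Finset.sum_range_succ']
        simp
      simp_rw [add_smul]
      rw [Finset.sum_add_distrib, hA, hB]

lemma expPoly_deriv_vanish (p : ℂ[X]) (b : ℂ) (hb : b ≠ 0) (N : ℕ)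
    (h : ∀ s ≤ N, ((expPolyTheta ^ s) p).eval b = 0) :
    ∀ t ≤ N, (derivative^[t] p).eval b = 0 := by
  intro t
  induction t using Nat.strong_induction_on with
  | _ t ih =>
    intro htN
    obtain ⟨c, hct, _, heq⟩ := expPolyTheta_pow_structure t p
    have h0 := h t htN
    rw [heq, eval_finset_sum] at h0
    rw [Finset.sum_range_succ] at h0
    have hzero : ∀ u ∈ Finset.range t, eval b (c u • ((X:ℂ[X]) ^ u * derivative^[u] p)) = 0 := by
      intro u hu
      rw [Finset.mem_range] at hu
      rw [eval_smul, eval_mul, ih u hu (le_trans (Nat.le_of_lt hu) htN)]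
      simp
    rw [Finset.sum_eq_zero hzero, zero_add, hct, one_smul, eval_mul, eval_pow, eval_X] at h0
    exact (mul_eq_zero.mp h0).resolve_left (pow_ne_zero _ hb)

lemma expPoly_kernel (k N : ℕ) (a : Fin k → ℂ) (ha : ∀ i, a i ≠ 0)
    (hinj : Function.Injective a) (q : Fin (k * (N + 1)) → ℂ)
    (hq : ∀ p : Fin k × Fin (N + 1),
      ∑ j : Fin (k * (N + 1)),
        q j * (a p.1 ^ ((j : ℕ) + 1) * (((j : ℕ) + 1 : ℕ) : ℂ) ^ (p.2 : ℕ)) = 0) :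
    q = 0 := by
  set r : ℂ[X] := ∑ j : Fin (k * (N + 1)), C (q j) * X ^ ((j : ℕ) + 1) with hr
  -- theta^s r
  have htheta : ∀ s : ℕ, (expPolyTheta ^ s) r
      = ∑ j : Fin (k * (N + 1)), C (q j * (((j : ℕ) + 1 : ℕ) : ℂ) ^ s) * X ^ ((j : ℕ) + 1) := by
    intro s
    rw [hr, map_sum]
    refine Finset.sum_congr rfl fun j _ => ?_
    rw [expPolyTheta_pow_monomial]
  -- evaluations vanish
  have heval : ∀ i : Fin k, ∀ s ≤ N, ((expPolyTheta ^ s) r).eval (a i) = 0 := by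
    intro i s hs
    rw [htheta, eval_finset_sum]
    have := hq (i, ⟨s, Nat.lt_succ_of_le hs⟩)
    simp only [eval_mul, eval_C, eval_pow, eval_X]
    rw [← this]
    refine Finset.sum_congr rfl fun j _ => ?_
    ring
  -- r = 0
  have hr0 : r = 0 := by
    by_contra hne
    have hdvd : ∀ i : Fin k, (X - C (a i)) ^ (N + 1) ∣ r := by
      intro i
      have hlt : N < r.rootMultiplicity (a i) := by
        apply lt_rootMultiplicity_of_isRoot_iterate_derivative_of_mem_nonZeroDivisors' hne
        · intro m hm
          exact expPoly_deriv_vanish r (a i) (ha i) N (heval i) m hm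
        · intro m _ hm0
          exact mem_nonZeroDivisors_of_ne_zero (Nat.cast_ne_zero.mpr hm0)
      exact dvd_trans (pow_dvd_pow _ hlt) (r.pow_rootMultiplicity_dvd (a i))
    have hP : (∏ i : Fin k, (X - C (a i)) ^ (N + 1)) ∣ r := by
      refine Fintype.prod_dvd_of_coprime ?_ hdvd
      intro i j hij
      exact ((pairwise_coprime_X_sub_C hinj) hij).pow
    obtain ⟨g, hg⟩ := hP
    have hPmonic : (∏ i : Fin k, ((X:ℂ[X]) - C (a i)) ^ (N + 1)).Monic :=
      monic_prod_of_monic _ _ fun i _ => (monic_X_sub_C (a i)).pow (N + 1)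
    have hPdeg : (∏ i : Fin k, ((X:ℂ[X]) - C (a i)) ^ (N + 1)).natDegree = k * (N + 1) := by
      rw [natDegree_prod _ _ fun i _ => pow_ne_zero _ (X_sub_C_ne_zero (a i))]
      simp [natDegree_pow]
    have hrdeg : r.natDegree ≤ k * (N + 1) := by
      refine natDegree_sum_le_of_forall_le _ _ fun j _ => ?_
      exact le_trans (natDegree_C_mul_X_pow_le _ _) (Nat.succ_le_of_lt j.isLt)
    have hg0 : g ≠ 0 := fun h => hne (by rw [hg, h, mul_zero])
    have hgdeg : g.natDegree = 0 := by
      have := natDegree_mul (hPmonic.ne_zero) hg0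
      rw [← hg, hPdeg] at this
      omega
    obtain ⟨cg, hcg⟩ := natDegree_eq_zero.mp hgdeg
    -- eval at 0
    have hre : r.eval 0 = 0 := by
      rw [hr, eval_finset_sum]
      refine Finset.sum_eq_zero fun j _ => ?_
      simp
    have hPe : (∏ i : Fin k, ((X:ℂ[X]) - C (a i)) ^ (N + 1)).eval 0 ≠ 0 := by
      rw [eval_prod]
      refine Finset.prod_ne_zero_iff.mpr fun i _ => ?_
      rw [eval_pow, eval_sub, eval_X, eval_C, zero_sub]
      exact pow_ne_zero _ (neg_ne_zero.mpr (ha i))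
    have : cg = 0 := by
      rw [hg, ← hcg, eval_mul, eval_C] at hre
      exact (mul_eq_zero.mp hre).resolve_left hPe
    rw [← hcg, this, map_zero] at hg0
    exact hg0 rfl
  -- coefficients
  funext j
  have : r.coeff ((j : ℕ) + 1) = q j := by
    rw [hr, finset_sum_coeff]
    rw [Finset.sum_eq_single j]
    · simp [coeff_C_mul_X_pow]
    · intro j' _ hj'
      rw [coeff_C_mul_X_pow]
      have : ¬((j : ℕ) + 1 = (j' : ℕ) + 1) := by
        simp only [Nat.add_right_cancel_iff]
        exact fun h => hj' (Fin.ext h.symm)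
      rw [if_neg this]
    · intro h
      exact absurd (Finset.mem_univ j) h
  rw [hr0] at this
  simp only [coeff_zero] at this
  simp [← this]

/-- For distinct nonzero complex numbers `a 1, …, a k` and `N ≥ 0`, the `k(N+1)`
functions `f_{i,s} : ℤ → ℂ`, `f_{i,s}(n) = a_i ^ n * n ^ s` (`1 ≤ i ≤ k`,
`0 ≤ s ≤ N`), are linearly independent over `ℂ`; in fact their restrictions to
the finite set `{1, 2, …, k(N+1)}` (modelled by `Fin (k*(N+1))`, where
`j : Fin (k*(N+1))` stands for the integer `j+1`) are already linearly
independent. -/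
theorem exponential_polynomials_linearIndependent
    (k N : ℕ) (hk : 0 < k) (a : Fin k → ℂ)
    (ha : ∀ i, a i ≠ 0) (hinj : Function.Injective a) :
    LinearIndependent ℂ
      (fun p : Fin k × Fin (N + 1) => fun n : ℤ =>
        (a p.1) ^ n * (n : ℂ) ^ (p.2 : ℕ)) ∧
    LinearIndependent ℂ
      (fun p : Fin k × Fin (N + 1) => fun j : Fin (k * (N + 1)) =>
        (a p.1) ^ ((j.val : ℤ) + 1) * ((j.val + 1 : ℕ) : ℂ) ^ (p.2 : ℕ)) := by
  set e := finProdFinEquiv (m := k) (n := N + 1) with he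
  set M : Matrix (Fin k × Fin (N + 1)) (Fin k × Fin (N + 1)) ℂ :=
    fun p p' => a p.1 ^ (((e p') : ℕ) + 1) * ((((e p') : ℕ) + 1 : ℕ) : ℂ) ^ (p.2 : ℕ) with hM
  have hdet : M.det ≠ 0 := by
    intro hd
    obtain ⟨v, hv0, hv⟩ := Matrix.exists_mulVec_eq_zero_iff.mpr hd
    have hq : ∀ p : Fin k × Fin (N + 1),
        ∑ j : Fin (k * (N + 1)),
          (v (e.symm j)) * (a p.1 ^ ((j : ℕ) + 1) * (((j : ℕ) + 1 : ℕ) : ℂ) ^ (p.2 : ℕ)) = 0 := by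
      intro p
      have := congrFun hv p
      simp only [Matrix.mulVec, dotProduct, Pi.zero_apply] at this
      rw [← this]
      rw [← Equiv.sum_comp e.symm (fun p' => M p p' * v p')]
      refine Finset.sum_congr rfl fun j _ => ?_
      rw [hM]
      simp only [Equiv.apply_symm_apply]
      ring
    have := expPoly_kernel k N a ha hinj _ hq
    apply hv0
    funext p'
    have := congrFun this (e p')
    simpa using this
  have hdetT : M.transpose.det ≠ 0 := by rwa [Matrix.det_transpose]
  have h2 : LinearIndependent ℂ
      (fun p : Fin k × Fin (N + 1) => fun j : Fin (k * (N + 1)) =>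
        (a p.1) ^ ((j.val : ℤ) + 1) * ((j.val + 1 : ℕ) : ℂ) ^ (p.2 : ℕ)) := by
    rw [Fintype.linearIndependent_iff]
    intro g hg
    by_contra hgne
    push_neg at hgne
    have hgne' : g ≠ 0 := by
      obtain ⟨i, hi⟩ := hgne
      exact fun h => hi (congrFun h i)
    have : M.transpose.det = 0 := by
      rw [← Matrix.exists_mulVec_eq_zero_iff]
      refine ⟨g, hgne', ?_⟩
      funext p'
      simp only [Matrix.mulVec, dotProduct, Pi.zero_apply]
      have := congrFun hg (e p')
      simp only [Finset.sum_apply, Pi.smul_apply, smul_eq_mul, Pi.zero_apply] at this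
      rw [← this]
      refine Finset.sum_congr rfl fun p _ => ?_
      rw [Matrix.transpose_apply, hM]
      have hz : (a p.1) ^ (((e p' : ℕ) : ℤ) + 1) = a p.1 ^ ((e p' : ℕ) + 1) := by
        rw [← zpow_natCast]
        norm_cast
      rw [hz]
      ring
    exact hdetT this
    -- dotProduct issue maybe
  refine ⟨?_, h2⟩
  apply LinearIndependent.of_comp
    (LinearMap.funLeft ℂ ℂ (fun j : Fin (k * (N + 1)) => ((j : ℕ) : ℤ) + 1))
  convert h2 using 1
  funext p j
  simp only [Function.comp_apply, LinearMap.funLeft_apply]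
  push_cast
  ring
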